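/- arXiv:2210.08326 — 2 statements merged into one kernel-verified Lean document; each statement's English description precedes it below -/
import Mathlib

section
/- Let X, Z be real-valued random variables on a probability space, with F(y) = P(Z ≤ y) and G(y) = P(X ≤ y). Suppose G is k-Lipschitz for some k > 0, and let σ² = Var(X − Z) and μ = E[X − Z]. Then for every ε > 0, sup_c |F(c) − G(c + μ)| ≤ kε + σ²/ε². -/
open MeasureTheory ProbabilityTheory

/-- Let `X, Z` be real random variables on a probability space with CDFs `G` and `F`
respectively.  If `G` is `k`-Lipschitz, `m = E[X - Z]` and `σ² = Var(X - Z)`, then for every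
`ε > 0` and every `c`, `|F c - G (c + m)| ≤ k ε + σ²/ε²`. -/
theorem stmt1 {Ω : Type*} [MeasureSpace Ω] {μ : Measure Ω} [IsProbabilityMeasure μ]
    (X Z : Ω → ℝ) (hX : Measurable X) (hZ : Measurable Z)
    (hL2 : MemLp (fun ω => X ω - Z ω) 2 μ)
    (F G : ℝ → ℝ)
    (hF : ∀ y, F y = (μ {ω | Z ω ≤ y}).toReal)
    (hG : ∀ y, G y = (μ {ω | X ω ≤ y}).toReal)
    (k : ℝ) (hk : 0 < k)
    (hLip : ∀ x y, |G x - G y| ≤ k * |x - y|)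
    (m σ : ℝ)
    (hm : m = ∫ ω, (X ω - Z ω) ∂μ)
    (hσ : σ ^ 2 = variance (fun ω => X ω - Z ω) μ) :
    ∀ ε : ℝ, 0 < ε → ∀ c : ℝ, |F c - G (c + m)| ≤ k * ε + σ ^ 2 / ε ^ 2 := by
  intro ε hε c
  have hσ0 : 0 ≤ σ ^ 2 := hσ ▸ variance_nonneg _ _
  -- Chebyshev
  have hcheb : (μ {ω | ε ≤ |(X ω - Z ω) - m|}).toReal ≤ σ ^ 2 / ε ^ 2 := by
    have h := meas_ge_le_variance_div_sq (μ := μ) hL2 hε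
    rw [← hσ, ← hm] at h
    exact ENNReal.toReal_le_of_le_ofReal (by positivity) h
  have measA : ∀ y, MeasurableSet {ω | X ω ≤ y} := fun y => hX measurableSet_Iic
  have measZ : ∀ y, MeasurableSet {ω | Z ω ≤ y} := fun y => hZ measurableSet_Iic
  have toReal_union : ∀ (A B : Set Ω),
      (μ (A ∪ B)).toReal ≤ (μ A).toReal + (μ B).toReal := by
    intro A B
    rw [← ENNReal.toReal_add (measure_ne_top μ A) (measure_ne_top μ B)]
    exact ENNReal.toReal_mono (by finiteness) (measure_union_le A B)
  -- upper bound: F c ≤ G (c + m + ε) + cheb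
  have h1 : F c ≤ G (c + m + ε) + σ ^ 2 / ε ^ 2 := by
    rw [hF, hG]
    have hsub : {ω | Z ω ≤ c} ⊆ {ω | X ω ≤ c + m + ε} ∪ {ω | ε ≤ |(X ω - Z ω) - m|} := by
      intro ω hω
      by_cases h : ε ≤ |(X ω - Z ω) - m|
      · exact Or.inr h
      · left
        push_neg at h
        have := abs_lt.mp h
        simp only [Set.mem_setOf_eq] at hω ⊢
        linarith [this.2]
    calc (μ {ω | Z ω ≤ c}).toReal
        ≤ (μ ({ω | X ω ≤ c + m + ε} ∪ {ω | ε ≤ |(X ω - Z ω) - m|})).toReal :=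
          ENNReal.toReal_mono (by finiteness) (measure_mono hsub)
      _ ≤ (μ {ω | X ω ≤ c + m + ε}).toReal + (μ {ω | ε ≤ |(X ω - Z ω) - m|}).toReal :=
          toReal_union _ _
      _ ≤ (μ {ω | X ω ≤ c + m + ε}).toReal + σ ^ 2 / ε ^ 2 := by linarith
  -- lower bound: G (c + m - ε) ≤ F c + cheb
  have h2 : G (c + m - ε) ≤ F c + σ ^ 2 / ε ^ 2 := by
    rw [hF, hG]
    have hsub : {ω | X ω ≤ c + m - ε} ⊆ {ω | Z ω ≤ c} ∪ {ω | ε ≤ |(X ω - Z ω) - m|} := by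
      intro ω hω
      by_cases h : ε ≤ |(X ω - Z ω) - m|
      · exact Or.inr h
      · left
        push_neg at h
        have := abs_lt.mp h
        simp only [Set.mem_setOf_eq] at hω ⊢
        linarith [this.1]
    calc (μ {ω | X ω ≤ c + m - ε}).toReal
        ≤ (μ ({ω | Z ω ≤ c} ∪ {ω | ε ≤ |(X ω - Z ω) - m|})).toReal :=
          ENNReal.toReal_mono (by finiteness) (measure_mono hsub)
      _ ≤ (μ {ω | Z ω ≤ c}).toReal + (μ {ω | ε ≤ |(X ω - Z ω) - m|}).toReal :=
          toReal_union _ _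
      _ ≤ (μ {ω | Z ω ≤ c}).toReal + σ ^ 2 / ε ^ 2 := by linarith
  -- Lipschitz bounds
  have hl1 : |G (c + m + ε) - G (c + m)| ≤ k * ε := by
    have := hLip (c + m + ε) (c + m)
    simpa [abs_of_pos hε] using this
  have hl2 : |G (c + m - ε) - G (c + m)| ≤ k * ε := by
    have := hLip (c + m - ε) (c + m)
    have h' : |c + m - ε - (c + m)| = ε := by rw [show c + m - ε - (c + m) = -ε by ring]; simp [abs_of_pos hε]
    rw [h'] at this
    exact this
  rw [abs_le] at *
  constructor <;> [linarith [hl2.1]; linarith [hl1.1]]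
end

section
/- Let X, Z be real-valued random variables with CDFs G and F respectively, where both F and G are k-Lipschitz, E[X − Z] = μ, and Var(X − Z) = σ². Then inf_{c ∈ ℝ} sup_{y ∈ ℝ} |F(y) − G(y + c)| ≤ 3(kσ/2)^{2/3}. -/
open MeasureTheory ProbabilityTheory

/-- Distributional shape bound: if `F`, `G` are the (k-Lipschitz) CDFs of `Z` and `X`, with
`E[X - Z] = m` and `Var(X - Z) = σ²`, then the location-shifted Kolmogorov–Smirnov distance
between them is at most `3 (kσ/2)^(2/3)`. -/
theorem stmt2 {Ω : Type*} [MeasureSpace Ω] {μ : Measure Ω} [IsProbabilityMeasure μ]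
    (X Z : Ω → ℝ) (hX : Measurable X) (hZ : Measurable Z)
    (hL2 : MemLp (fun ω => X ω - Z ω) 2 μ)
    (F G : ℝ → ℝ)
    (hF : ∀ y, F y = (μ {ω | Z ω ≤ y}).toReal)
    (hG : ∀ y, G y = (μ {ω | X ω ≤ y}).toReal)
    (k : ℝ) (hk : 0 < k)
    (hLipF : ∀ x y, |F x - F y| ≤ k * |x - y|)
    (hLipG : ∀ x y, |G x - G y| ≤ k * |x - y|)
    (m σ : ℝ) (hσ0 : 0 ≤ σ)
    (hm : m = ∫ ω, (X ω - Z ω) ∂μ)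
    (hσ : σ ^ 2 = variance (fun ω => X ω - Z ω) μ) :
    (⨅ c : ℝ, ⨆ y : ℝ, |F y - G (y + c)|) ≤ 3 * (k * σ / 2) ^ ((2 : ℝ) / 3) := by
  -- key pointwise bound
  have cheb : ∀ ε : ℝ, 0 < ε →
      (μ {ω | ε ≤ |(X ω - Z ω) - m|}).toReal ≤ σ ^ 2 / ε ^ 2 := by
    intro ε hε
    have h := meas_ge_le_variance_div_sq (μ := μ) hL2 hε
    rw [← hm] at h
    have h2 : (μ {ω | ε ≤ |(X ω - Z ω) - m|}).toReal ≤
        (ENNReal.ofReal (variance (fun ω => X ω - Z ω) μ / ε ^ 2)).toReal := by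
      apply ENNReal.toReal_mono ENNReal.ofReal_ne_top
      exact h
    calc (μ {ω | ε ≤ |(X ω - Z ω) - m|}).toReal
        ≤ (ENNReal.ofReal (variance (fun ω => X ω - Z ω) μ / ε ^ 2)).toReal := h2
      _ ≤ σ ^ 2 / ε ^ 2 := by
          rw [ENNReal.toReal_ofReal_eq_iff.mpr, hσ]
          rw [← hσ]
          positivity
  have key : ∀ y : ℝ, ∀ ε : ℝ, 0 < ε → |F y - G (y + m)| ≤ k * ε + σ ^ 2 / ε ^ 2 := by
    intro y ε hε
    set C := {ω | ε ≤ |(X ω - Z ω) - m|} with hC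
    have hμC : (μ C).toReal ≤ σ ^ 2 / ε ^ 2 := cheb ε hε
    -- F y ≤ G (y + m + ε) + σ²/ε²
    have h1 : F y ≤ G (y + m + ε) + σ ^ 2 / ε ^ 2 := by
      have hsub : {ω | Z ω ≤ y} ⊆ {ω | X ω ≤ y + m + ε} ∪ C := by
        intro ω hω
        by_cases hc : ε ≤ |(X ω - Z ω) - m|
        · exact Or.inr hc
        · left
          push_neg at hc
          have := abs_lt.mp hc
          simp only [Set.mem_setOf_eq] at hω ⊢
          linarith [this.2]
      have hmeas := (measure_mono hsub).trans (measure_union_le (μ := μ) _ _)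
      rw [hF, hG]
      have hfin : μ {ω | X ω ≤ y + m + ε} + μ C ≠ ⊤ :=
        ENNReal.add_ne_top.mpr ⟨measure_ne_top μ _, measure_ne_top μ _⟩
      have := ENNReal.toReal_mono hfin hmeas
      rw [ENNReal.toReal_add (measure_ne_top _ _) (measure_ne_top _ _)] at this
      linarith
    -- G (y + m) ≤ F (y + ε) + σ²/ε²
    have h2 : G (y + m) ≤ F (y + ε) + σ ^ 2 / ε ^ 2 := by
      have hsub : {ω | X ω ≤ y + m} ⊆ {ω | Z ω ≤ y + ε} ∪ C := by
        intro ω hω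
        by_cases hc : ε ≤ |(X ω - Z ω) - m|
        · exact Or.inr hc
        · left
          push_neg at hc
          have := abs_lt.mp hc
          simp only [Set.mem_setOf_eq] at hω ⊢
          linarith [this.1]
      have hmeas := (measure_mono hsub).trans (measure_union_le (μ := μ) _ _)
      rw [hF, hG]
      have hfin : μ {ω | Z ω ≤ y + ε} + μ C ≠ ⊤ :=
        ENNReal.add_ne_top.mpr ⟨measure_ne_top μ _, measure_ne_top μ _⟩
      have := ENNReal.toReal_mono hfin hmeas
      rw [ENNReal.toReal_add (measure_ne_top _ _) (measure_ne_top _ _)] at this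
      linarith
    have hG1 : |G (y + m + ε) - G (y + m)| ≤ k * ε := by
      have := hLipG (y + m + ε) (y + m)
      simpa [abs_of_pos hε] using this
    have hF1 : |F (y + ε) - F y| ≤ k * ε := by
      have := hLipF (y + ε) y
      simpa [abs_of_pos hε] using this
    rw [abs_le] at hG1 hF1 ⊢
    constructor <;> [linarith [hG1.2, h2]; linarith [hG1.1, h1]]
  -- now conclude
  have hRnn : 0 ≤ 3 * (k * σ / 2) ^ ((2 : ℝ) / 3) := by positivity
  have pointwise : ∀ y : ℝ, |F y - G (y + m)| ≤ 3 * (k * σ / 2) ^ ((2 : ℝ) / 3) := by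
    intro y
    rcases eq_or_lt_of_le hσ0 with hσ0' | hσ0'
    · -- σ = 0
      have h0 : |F y - G (y + m)| ≤ 0 := by
        refine le_of_forall_pos_le_add ?_
        intro δ hδ
        have := key y (δ / k) (by positivity)
        rw [← hσ0'] at this
        have : |F y - G (y + m)| ≤ k * (δ / k) + 0 := by
          simpa using this
        rw [mul_div_cancel₀ _ hk.ne'] at this
        linarith
      linarith
    · -- σ > 0
      set t : ℝ := (2 * σ ^ 2 / k) ^ ((1 : ℝ) / 3) with ht
      have hbase : 0 < 2 * σ ^ 2 / k := by positivity
      have htpos : 0 < t := Real.rpow_pos_of_pos hbase _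
      have ht3 : t ^ 3 = 2 * σ ^ 2 / k := by
        rw [ht, ← Real.rpow_natCast _ 3, ← Real.rpow_mul hbase.le]
        norm_num
      set v : ℝ := (k * σ / 2) ^ ((2 : ℝ) / 3) with hv
      have hvpos : 0 < v := Real.rpow_pos_of_pos (by positivity) _
      have hv3 : v ^ 3 = (k * σ / 2) ^ 2 := by
        rw [hv, ← Real.rpow_natCast _ 3, ← Real.rpow_mul (by positivity)]
        norm_num
      have hkt : k * t ^ 3 = 2 * σ ^ 2 := by
        rw [ht3]; field_simp
      have hst : σ ^ 2 / t ^ 2 = k * t / 2 := by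
        have ht2 : t ^ 2 ≠ 0 := by positivity
        field_simp
        linear_combination -hkt
      have hu3 : (σ ^ 2 / t ^ 2) ^ 3 = (k * σ / 2) ^ 2 := by
        rw [hst]
        linear_combination (k ^ 2 / 8) * hkt
      have huv : σ ^ 2 / t ^ 2 ≤ v := by
        apply le_of_pow_le_pow_left₀ (n := 3) (by norm_num) hvpos.le
        rw [hu3, hv3]
      have hsum : k * t + σ ^ 2 / t ^ 2 = 3 * (σ ^ 2 / t ^ 2) := by
        rw [hst]; ring
      have := key y t htpos
      calc |F y - G (y + m)| ≤ k * t + σ ^ 2 / t ^ 2 := this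
        _ = 3 * (σ ^ 2 / t ^ 2) := hsum
        _ ≤ 3 * v := by linarith
  have hbdd : BddAbove (Set.range fun y => |F y - G (y + m)|) := by
    refine ⟨3 * (k * σ / 2) ^ ((2 : ℝ) / 3), ?_⟩
    rintro x ⟨y, rfl⟩
    exact pointwise y
  have hsup : (⨆ y : ℝ, |F y - G (y + m)|) ≤ 3 * (k * σ / 2) ^ ((2 : ℝ) / 3) :=
    ciSup_le pointwise
  refine le_trans (ciInf_le ?_ m) hsup
  refine ⟨0, ?_⟩
  rintro x ⟨c, rfl⟩
  simp only
  by_cases h : BddAbove (Set.range fun y => |F y - G (y + c)|)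
  · exact le_ciSup_of_le h 0 (abs_nonneg _)
  · rw [Real.iSup_of_not_bddAbove h]
end
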